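/- Let P be a positive integer and for each p ∈ {1,...,P} let n_p > k_p ≥ 1 be integers, with k = k_1 + ... + k_P and n = n_1 + ... + n_P. Then the asymptotic Protocol-B rate R_B = ( Σ_p (k_p/k) · (n_p/(n_p - k_p)) )^{-1} is at most (n-k)/n, with equality if and only if all ratios k_p/n_p are equal. -/

import Mathlib

/-- The asymptotic Protocol-B rate for a direct sum is at most the asymptotic
MDS-PIR capacity `(n-k)/n`, with equality iff all component ratios `k_p/n_p` are equal. -/
theorem protocolB_rate_le_capacity (P : ℕ) (hP : 1 ≤ P)
    (np kp : Fin P → ℕ) (hk : ∀ p, 1 ≤ kp p) (hn : ∀ p, kp p < np p)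
    (k n : ℕ) (hksum : k = ∑ p, kp p) (hnsum : n = ∑ p, np p) :
    ((∑ p, ((kp p : ℝ) / k) * ((np p : ℝ) / ((np p : ℝ) - kp p)))⁻¹ ≤
      ((n : ℝ) - k) / n) ∧
    ((∑ p, ((kp p : ℝ) / k) * ((np p : ℝ) / ((np p : ℝ) - kp p)))⁻¹ =
      ((n : ℝ) - k) / n ↔ ∀ p q, (kp p : ℝ) / np p = (kp q : ℝ) / np q) := by
  have hPne : Nonempty (Fin P) := ⟨⟨0, hP⟩⟩
  have hx : ∀ p, (0:ℝ) < (np p : ℝ) - kp p := by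
    intro p
    have : (kp p : ℝ) < np p := by exact_mod_cast hn p
    linarith
  have hkp : ∀ p, (0:ℝ) < kp p := by
    intro p
    have : (1:ℝ) ≤ kp p := by exact_mod_cast hk p
    linarith
  have hnp : ∀ p, (0:ℝ) < np p := fun p => by linarith [hx p, hkp p]
  have hkR : (k:ℝ) = ∑ p, (kp p:ℝ) := by rw [hksum]; push_cast; rfl
  have hnR : (n:ℝ) = ∑ p, (np p:ℝ) := by rw [hnsum]; push_cast; rfl
  have hXR : (n:ℝ) - k = ∑ p, ((np p:ℝ) - kp p) := by
    rw [hkR, hnR, Finset.sum_sub_distrib]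
  have hkpos : (0:ℝ) < k := by
    rw [hkR]; exact Finset.sum_pos (fun p _ => hkp p) Finset.univ_nonempty
  have hXpos : (0:ℝ) < (n:ℝ) - k := by
    rw [hXR]; exact Finset.sum_pos (fun p _ => hx p) Finset.univ_nonempty
  have hnpos : (0:ℝ) < n := by linarith
  set c : ℝ := (k:ℝ) / ((n:ℝ) - k) with hc
  set E : ℝ := ∑ p, ((kp p:ℝ) - c * ((np p:ℝ) - kp p))^2 / ((np p:ℝ) - kp p) with hE
  have hEnn : 0 ≤ E := Finset.sum_nonneg fun p _ =>
    div_nonneg (sq_nonneg _) (le_of_lt (hx p))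
  -- per-term split
  have hsplit : ∀ p, ((kp p : ℝ) / k) * ((np p : ℝ) / ((np p : ℝ) - kp p)) =
      (((kp p:ℝ) - c * ((np p:ℝ) - kp p))^2 / ((np p:ℝ) - kp p)) / k
      + (2*c*(kp p:ℝ) - c^2*((np p:ℝ) - kp p) + (kp p:ℝ)) / k := by
    intro p
    have h1 : ((np p:ℝ) - kp p) ≠ 0 := ne_of_gt (hx p)
    have h2 : (k:ℝ) ≠ 0 := ne_of_gt hkpos
    field_simp
    ring
  have hS : (∑ p, ((kp p : ℝ) / k) * ((np p : ℝ) / ((np p : ℝ) - kp p)))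
      = E / k + (n:ℝ) / ((n:ℝ) - k) := by
    rw [Finset.sum_congr rfl (fun p _ => hsplit p), Finset.sum_add_distrib,
      ← Finset.sum_div, ← Finset.sum_div]
    congr 1
    have : ∑ p, (2*c*(kp p:ℝ) - c^2*((np p:ℝ) - kp p) + (kp p:ℝ))
        = 2*c*(k:ℝ) - c^2*((n:ℝ)-k) + k := by
      rw [Finset.sum_add_distrib, Finset.sum_sub_distrib,
        ← Finset.mul_sum, ← Finset.mul_sum, ← hkR, ← hXR]
    rw [this, hc]
    have h2 : (k:ℝ) ≠ 0 := ne_of_gt hkpos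
    have h3 : ((n:ℝ) - k) ≠ 0 := ne_of_gt hXpos
    field_simp
    ring
  set S : ℝ := ∑ p, ((kp p : ℝ) / k) * ((np p : ℝ) / ((np p : ℝ) - kp p)) with hSdef
  have hSge : (n:ℝ) / ((n:ℝ) - k) ≤ S := by
    rw [hS]
    have : 0 ≤ E / k := div_nonneg hEnn (le_of_lt hkpos)
    linarith
  have hcap : (0:ℝ) < (n:ℝ) / ((n:ℝ) - k) := div_pos hnpos hXpos
  constructor
  · have h1 : S⁻¹ ≤ ((n:ℝ) / ((n:ℝ) - k))⁻¹ := by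
      apply inv_anti₀ hcap hSge
    rwa [inv_div] at h1
  · -- equality part
    have hiff1 : S⁻¹ = ((n:ℝ) - k) / n ↔ S = (n:ℝ) / ((n:ℝ) - k) := by
      rw [← inv_div (n:ℝ) ((n:ℝ)-k), inv_eq_iff_eq_inv, inv_inv]
    have hiff2 : S = (n:ℝ) / ((n:ℝ) - k) ↔ E = 0 := by
      rw [hS]
      constructor
      · intro h
        have : E / k = 0 := by linarith
        field_simp at this
        simpa using this
      · intro h; rw [h]; simp
    have hiff3 : E = 0 ↔ ∀ p, (kp p:ℝ) = c * ((np p:ℝ) - kp p) := by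
      rw [hE, Finset.sum_eq_zero_iff_of_nonneg
        (fun p _ => div_nonneg (sq_nonneg _) (le_of_lt (hx p)))]
      constructor
      · intro h p
        have := h p (Finset.mem_univ p)
        rw [div_eq_zero_iff] at this
        rcases this with h' | h'
        · have := pow_eq_zero_iff (n := 2) (by norm_num) |>.mp h'
          linarith [this]
        · exact absurd h' (ne_of_gt (hx p))
      · intro h p _
        rw [sub_eq_zero.mpr (h p)]  -- maybe wrong shape
        simp
    have hiff4 : (∀ p, (kp p:ℝ) = c * ((np p:ℝ) - kp p)) ↔
        ∀ p q, (kp p : ℝ) / np p = (kp q : ℝ) / np q := by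
      constructor
      · intro h p q
        have hc1 : (0:ℝ) < c + 1 := by
          have : 0 ≤ c := div_nonneg (le_of_lt hkpos) (le_of_lt hXpos)
          linarith
        have key : ∀ r, (kp r:ℝ) / np r = c / (c+1) := by
          intro r
          rw [div_eq_div_iff (ne_of_gt (hnp r)) (ne_of_gt hc1)]
          linear_combination h r
        rw [key p, key q]
      · intro h p
        have hcross : ∀ q, (kp p:ℝ) * ((np q:ℝ) - kp q) = (kp q:ℝ) * ((np p:ℝ) - kp p) := by
          intro q
          have := (div_eq_div_iff (ne_of_gt (hnp p)) (ne_of_gt (hnp q))).mp (h p q)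
          linear_combination this
        have hmain : (kp p:ℝ) * ((n:ℝ) - k) = (k:ℝ) * ((np p:ℝ) - kp p) := by
          rw [hXR, hkR, Finset.mul_sum, Finset.sum_mul]
          exact Finset.sum_congr rfl (fun q _ => hcross q)
        rw [hc]
        have h3 : ((n:ℝ) - k) ≠ 0 := ne_of_gt hXpos
        field_simp
        linear_combination hmain
    rw [hiff1, hiff2, hiff3, hiff4]
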